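/- For each ℓ ∈ ℕ and each k with 1 ≤ k ≤ ℓ, define E_k = {(2k)!·1, ..., (2k)!·k} and E = ⋃_{k∈ℕ} E_k. Then for every r ≥ 2^ℓ there exists R with E_R a Δ_{ℓ,r} set; consequently E is a Δ_{ℓ,0} set for every ℓ ∈ ℕ (it contains a set D_ℓ((n_k)_{k=1}^r) for every r ≥ 2^ℓ). -/

import Mathlib

/-- The iterated difference map: `del ℓ f` is `∂(f 0, ..., f (2^ℓ - 1))`. -/
def del : ℕ → (ℕ → ℤ) → ℤ
  | 0, f => f 0
  | (ℓ + 1), f => del ℓ (fun i => f (2 ^ ℓ + i)) - del ℓ f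

lemma del_smul (c : ℤ) : ∀ (ℓ : ℕ) (f : ℕ → ℤ),
    del ℓ (fun i => c * f i) = c * del ℓ f
  | 0, f => rfl
  | (ℓ + 1), f => by
    show del ℓ (fun i => c * f (2 ^ ℓ + i)) - del ℓ (fun i => c * f i) = _
    rw [del_smul c ℓ, del_smul c ℓ]
    show _ = c * (del ℓ (fun i => f (2 ^ ℓ + i)) - del ℓ f)
    ring

lemma del_abs_le : ∀ (ℓ : ℕ) (f : ℕ → ℤ),
    |del ℓ f| ≤ ∑ i ∈ Finset.range (2 ^ ℓ), |f i|
  | 0, f => by simp [del]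
  | (ℓ + 1), f => by
    have h1 := del_abs_le ℓ (fun i => f (2 ^ ℓ + i))
    have h2 := del_abs_le ℓ f
    have hsplit : ∑ i ∈ Finset.range (2 ^ (ℓ + 1)), |f i| =
        ∑ i ∈ Finset.range (2 ^ ℓ), |f i| +
          ∑ i ∈ Finset.range (2 ^ ℓ), |f (2 ^ ℓ + i)| := by
      rw [pow_succ, mul_two, Finset.sum_range_add]
    show |del ℓ (fun i => f (2 ^ ℓ + i)) - del ℓ f| ≤ _
    calc |del ℓ (fun i => f (2 ^ ℓ + i)) - del ℓ f|
        ≤ |del ℓ (fun i => f (2 ^ ℓ + i))| + |del ℓ f| := abs_sub _ _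
      _ ≤ _ := by rw [hsplit]; linarith

lemma del_near_top : ∀ (ℓ : ℕ) (f : ℕ → ℤ),
    |del ℓ f - f (2 ^ ℓ - 1)| ≤ ∑ i ∈ Finset.range (2 ^ ℓ - 1), |f i|
  | 0, f => by simp [del]
  | (ℓ + 1), f => by
    have h1 := del_near_top ℓ (fun i => f (2 ^ ℓ + i))
    have h2 := del_abs_le ℓ f
    have hpow : 1 ≤ 2 ^ ℓ := Nat.one_le_two_pow
    have he : 2 ^ (ℓ + 1) - 1 = 2 ^ ℓ + (2 ^ ℓ - 1) := by
      rw [pow_succ, mul_two]; omega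
    have hsplit : ∑ i ∈ Finset.range (2 ^ (ℓ + 1) - 1), |f i| =
        ∑ i ∈ Finset.range (2 ^ ℓ), |f i| +
          ∑ i ∈ Finset.range (2 ^ ℓ - 1), |f (2 ^ ℓ + i)| := by
      rw [he, Finset.sum_range_add]
    have htop : f (2 ^ (ℓ + 1) - 1) = f (2 ^ ℓ + (2 ^ ℓ - 1)) := by rw [he]
    show |del ℓ (fun i => f (2 ^ ℓ + i)) - del ℓ f - f (2 ^ (ℓ + 1) - 1)| ≤ _
    rw [htop, hsplit]
    have : |del ℓ (fun i => f (2 ^ ℓ + i)) - del ℓ f - f (2 ^ ℓ + (2 ^ ℓ - 1))|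
        ≤ |del ℓ (fun i => f (2 ^ ℓ + i)) - f (2 ^ ℓ + (2 ^ ℓ - 1))| + |del ℓ f| := by
      have := abs_sub (del ℓ (fun i => f (2 ^ ℓ + i)) - f (2 ^ ℓ + (2 ^ ℓ - 1))) (del ℓ f)
      calc |del ℓ (fun i => f (2 ^ ℓ + i)) - del ℓ f - f (2 ^ ℓ + (2 ^ ℓ - 1))|
          = |del ℓ (fun i => f (2 ^ ℓ + i)) - f (2 ^ ℓ + (2 ^ ℓ - 1)) - del ℓ f| := by
            congr 1; ring
        _ ≤ _ := abs_sub _ _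
    linarith

lemma geom_sum_lt_three_pow (j : ℕ → ℕ) (hj : StrictMono j) :
    ∀ k : ℕ, 2 * ∑ i ∈ Finset.range k, (3 : ℤ) ^ (j i) ≤ 3 ^ (j k) - 1
  | 0 => by
    simp only [Finset.range_zero, Finset.sum_empty, mul_zero]
    have : (1 : ℤ) ≤ 3 ^ (j 0) := one_le_pow₀ (by norm_num)
    linarith
  | (k + 1) => by
    have ih := geom_sum_lt_three_pow j hj k
    have hjk : j k + 1 ≤ j (k + 1) := hj (Nat.lt_succ_self k)
    have hmono : (3 : ℤ) ^ (j k + 1) ≤ 3 ^ (j (k + 1)) :=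
      pow_le_pow_right₀ (by norm_num) hjk
    rw [Finset.sum_range_succ]
    rw [pow_succ] at hmono
    linarith

/-- With `E_k = {(2k)!·1, ..., (2k)!·k}` and `E = ⋃_k E_k`: for every `ℓ ≥ 1` and every
`r ≥ 2^ℓ` there are `R` and an `r`-element integer sequence whose `ℓ`-th difference set
lies in `E_R`; consequently `E` is a `Δ_{ℓ,0}` set for every `ℓ`. -/
theorem Eset_is_Delta_ell_zero (ℓ : ℕ) (hℓ : 1 ≤ ℓ) (r : ℕ) (hr : 2 ^ ℓ ≤ r) :
    ∃ R : ℕ, ∃ n : ℕ → ℤ, ∀ j : ℕ → ℕ, StrictMono j → j (2 ^ ℓ - 1) < r →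
      ∃ m : ℕ, 1 ≤ m ∧ m ≤ R ∧
        del ℓ (fun i => n (j i)) = (((2 * R).factorial * m : ℕ) : ℤ) := by
  refine ⟨3 ^ r, fun k => ((2 * 3 ^ r).factorial : ℤ) * 3 ^ k, fun j hj hjr => ?_⟩
  set c : ℤ := ((2 * 3 ^ r).factorial : ℤ) with hc
  set g : ℤ := del ℓ (fun i => (3 : ℤ) ^ (j i)) with hg
  -- bounds on g
  set T : ℕ := j (2 ^ ℓ - 1) with hT
  have hnear := del_near_top ℓ (fun i => (3 : ℤ) ^ (j i))
  have hsum : ∑ i ∈ Finset.range (2 ^ ℓ - 1), |(3 : ℤ) ^ (j i)| =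
      ∑ i ∈ Finset.range (2 ^ ℓ - 1), (3 : ℤ) ^ (j i) := by
    apply Finset.sum_congr rfl
    intro i _
    exact abs_of_nonneg (by positivity)
  have hgeo := geom_sum_lt_three_pow j hj (2 ^ ℓ - 1)
  rw [hsum] at hnear
  have habs : |g - 3 ^ T| ≤ ∑ i ∈ Finset.range (2 ^ ℓ - 1), (3 : ℤ) ^ (j i) := hnear
  have habs' := abs_le.mp habs
  have hTpos : (1 : ℤ) ≤ 3 ^ T := one_le_pow₀ (by norm_num)
  have hg1 : 1 ≤ g := by nlinarith [habs'.1, habs'.2]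
  have hgR : g ≤ 3 ^ r := by
    have hTr : T + 1 ≤ r := hjr
    have : (3 : ℤ) ^ (T + 1) ≤ 3 ^ r := pow_le_pow_right₀ (by norm_num) hTr
    rw [pow_succ] at this
    nlinarith [habs'.2]
  refine ⟨g.toNat, ?_, ?_, ?_⟩
  · omega
  · have : (g.toNat : ℤ) ≤ ((3 ^ r : ℕ) : ℤ) := by
      rw [Int.toNat_of_nonneg (by omega)]
      push_cast
      exact hgR
    exact_mod_cast this
  · have hdel : del ℓ (fun i => c * (3 : ℤ) ^ (j i)) = c * g := del_smul c ℓ _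
    push_cast
    rw [Int.toNat_of_nonneg (by omega)]
    exact hdel
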